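/- Let q > 1 be a real number. Let ρ₁ be a quantum state (positive semidefinite matrix with trace 1) of size d₁ and let ρ₂ be a pure quantum state (a positive semidefinite matrix of trace 1 and rank 1) of size d₂. Then equality holds in the norm inequality for the product state ρ = ρ₁ ⊗ ρ₂ (Kronecker product): 1 + ‖ρ₁ ⊗ ρ₂‖_q = ‖Tr₁(ρ₁ ⊗ ρ₂)‖_q + ‖Tr₂(ρ₁ ⊗ ρ₂)‖_q, i.e., 1 + ‖ρ₁ ⊗ ρ₂‖_q = ‖ρ₂‖_q + ‖ρ₁‖_q. -/

import Mathlib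

open Matrix ComplexOrder Kronecker

/-- `Tr[A^q]` for a Hermitian matrix `A`, where `A^q` is the matrix power obtained by raising
each eigenvalue of `A` to the (real) power `q`; defined as `0` if `A` is not Hermitian. -/
noncomputable def traceRpow {d : Type*} [Fintype d] [DecidableEq d]
    (q : ℝ) (A : Matrix d d ℂ) : ℝ :=
  if hA : A.IsHermitian then ∑ i, hA.eigenvalues i ^ q else 0

/-- The Schatten `q`-norm `‖A‖_q = (Tr[A^q])^{1/q}` of a positive semidefinite matrix `A`. -/
noncomputable def schattenNorm {d : Type*} [Fintype d] [DecidableEq d]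
    (q : ℝ) (A : Matrix d d ℂ) : ℝ :=
  traceRpow q A ^ (1 / q)

/-- The partial trace over the first tensor factor: `(Tr₁ρ)(j,j') = ∑ i, ρ((i,j),(i,j'))`. -/
noncomputable def ptrace1 {d₁ d₂ : ℕ}
    (ρ : Matrix (Fin d₁ × Fin d₂) (Fin d₁ × Fin d₂) ℂ) : Matrix (Fin d₂) (Fin d₂) ℂ :=
  Matrix.of fun j j' => ∑ i, ρ (i, j) (i, j')

/-- The partial trace over the second tensor factor: `(Tr₂ρ)(i,i') = ∑ j, ρ((i,j),(i',j))`. -/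
noncomputable def ptrace2 {d₁ d₂ : ℕ}
    (ρ : Matrix (Fin d₁ × Fin d₂) (Fin d₁ × Fin d₂) ℂ) : Matrix (Fin d₁) (Fin d₁) ℂ :=
  Matrix.of fun i i' => ∑ j, ρ (i, j) (i', j)


section Aux
open Polynomial

variable {n : Type*} [Fintype n] [DecidableEq n]

lemma charpoly_conj_unitary (U N : Matrix n n ℂ) (hU : U ∈ Matrix.unitaryGroup n ℂ) :
    (U * N * star U).charpoly = N.charpoly := by
  have hC : ((C : ℂ →+* ℂ[X]).mapMatrix U) * ((C : ℂ →+* ℂ[X]).mapMatrix (star U)) = 1 := by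
    rw [← _root_.map_mul, Matrix.mem_unitaryGroup_iff.mp hU, _root_.map_one]
  have key : Matrix.charmatrix (U * N * star U)
      = ((C : ℂ →+* ℂ[X]).mapMatrix U) * Matrix.charmatrix N
        * ((C : ℂ →+* ℂ[X]).mapMatrix (star U)) := by
    unfold Matrix.charmatrix
    rw [mul_sub, sub_mul, _root_.map_mul, _root_.map_mul]
    congr 1
    have hs : (C : ℂ →+* ℂ[X]).mapMatrix U * Matrix.scalar n (X : ℂ[X])
        = Matrix.scalar n (X : ℂ[X]) * (C : ℂ →+* ℂ[X]).mapMatrix U :=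
      ((Matrix.scalar_commute (X : ℂ[X]) (fun r => Commute.all _ _) _)).symm
    rw [hs, mul_assoc, hC, mul_one]
  unfold Matrix.charpoly
  rw [key, Matrix.det_mul, Matrix.det_mul]
  have : ((C : ℂ →+* ℂ[X]).mapMatrix U).det * (((C : ℂ →+* ℂ[X]).mapMatrix (star U)).det) = 1 := by
    rw [← Matrix.det_mul, hC, Matrix.det_one]
  calc ((C : ℂ →+* ℂ[X]).mapMatrix U).det * N.charmatrix.det * ((C : ℂ →+* ℂ[X]).mapMatrix (star U)).det
      = ((C : ℂ →+* ℂ[X]).mapMatrix U).det * (((C : ℂ →+* ℂ[X]).mapMatrix (star U)).det) * N.charmatrix.det := by ring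
    _ = N.charmatrix.det := by rw [this, one_mul]

lemma charpoly_diagonal_c (a : n → ℂ) :
    (Matrix.diagonal a).charpoly = ∏ i, (X - C (a i)) := by
  unfold Matrix.charpoly
  have : Matrix.charmatrix (Matrix.diagonal a) = Matrix.diagonal (fun i => X - C (a i)) := by
    ext i j
    by_cases h : i = j
    · subst h; simp
    · simp [Matrix.charmatrix_apply_ne _ _ _ h, Matrix.diagonal_apply_ne _ h]
  rw [this, Matrix.det_diagonal]

lemma eigs_multiset {A U : Matrix n n ℂ} (hU : U ∈ Matrix.unitaryGroup n ℂ) (d : n → ℝ)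
    (h : A = U * Matrix.diagonal (fun i => (d i : ℂ)) * star U) (hA : A.IsHermitian) :
    Multiset.map hA.eigenvalues Finset.univ.val = Multiset.map d Finset.univ.val := by
  have h1 : A.charpoly = ∏ i, (X - C ((d i : ℂ))) := by
    rw [h, charpoly_conj_unitary _ _ hU, charpoly_diagonal_c]
  have h2 : A.charpoly = ∏ i, (X - C ((hA.eigenvalues i : ℂ))) := by
    conv_lhs => rw [hA.spectral_theorem]
    simp only [Unitary.conjStarAlgAut_apply, Unitary.coe_star]
    rw [charpoly_conj_unitary _ _ (hA.eigenvectorUnitary).2]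
    exact charpoly_diagonal_c _
  have key : Multiset.map (fun i => ((hA.eigenvalues i : ℂ))) Finset.univ.val
      = Multiset.map (fun i => ((d i : ℂ))) Finset.univ.val := by
    have r1 := Polynomial.roots_multiset_prod_X_sub_C
      (Multiset.map (fun i => ((hA.eigenvalues i : ℂ))) Finset.univ.val)
    have r2 := Polynomial.roots_multiset_prod_X_sub_C
      (Multiset.map (fun i => ((d i : ℂ))) Finset.univ.val)
    rw [Multiset.map_map] at r1 r2
    have e1 : (Multiset.map (fun i => X - C ((hA.eigenvalues i : ℂ))) Finset.univ.val).prod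
        = ∏ i, (X - C ((hA.eigenvalues i : ℂ))) := rfl
    have e2 : (Multiset.map (fun i => X - C ((d i : ℂ))) Finset.univ.val).prod
        = ∏ i, (X - C ((d i : ℂ))) := rfl
    rw [← r1, ← r2]
    simp only [Function.comp]
    rw [e1, e2, ← h1, ← h2]
  have : Multiset.map (Complex.ofReal) (Multiset.map hA.eigenvalues Finset.univ.val)
      = Multiset.map (Complex.ofReal) (Multiset.map d Finset.univ.val) := by
    rw [Multiset.map_map, Multiset.map_map]; exact key
  exact Multiset.map_injective Complex.ofReal_injective this

lemma sum_f_eigs {A U : Matrix n n ℂ} (hU : U ∈ Matrix.unitaryGroup n ℂ) (d : n → ℝ)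
    (h : A = U * Matrix.diagonal (fun i => (d i : ℂ)) * star U) (hA : A.IsHermitian)
    (f : ℝ → ℝ) : ∑ i, f (hA.eigenvalues i) = ∑ i, f (d i) := by
  have := eigs_multiset hU d h hA
  calc ∑ i, f (hA.eigenvalues i)
      = (Multiset.map f (Multiset.map hA.eigenvalues Finset.univ.val)).sum := by
        rw [Multiset.map_map]; rfl
    _ = (Multiset.map f (Multiset.map d Finset.univ.val)).sum := by rw [this]
    _ = ∑ i, f (d i) := by rw [Multiset.map_map]; rfl

lemma trace_eq_sum_eigs {A : Matrix n n ℂ} (hA : A.IsHermitian) :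
    A.trace = ∑ i, (hA.eigenvalues i : ℂ) := by
  conv_lhs => rw [hA.spectral_theorem]
  simp only [Unitary.conjStarAlgAut_apply, Unitary.coe_star]
  rw [Matrix.trace_mul_cycle, Matrix.mem_unitaryGroup_iff'.mp (hA.eigenvectorUnitary).2,
    one_mul, Matrix.trace_diagonal]
  rfl

lemma conjTranspose_kron {m : Type*} [Fintype m] [DecidableEq m]
    (A : Matrix m m ℂ) (B : Matrix n n ℂ) : (A ⊗ₖ B)ᴴ = Aᴴ ⊗ₖ Bᴴ := by
  ext ⟨i, j⟩ ⟨i', j'⟩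
  simp [Matrix.conjTranspose_apply]

end Aux

theorem schattenNorm_product_pure_eq {d₁ d₂ : ℕ} (q : ℝ) (hq : 1 < q)
    (ρ₁ : Matrix (Fin d₁) (Fin d₁) ℂ) (ρ₂ : Matrix (Fin d₂) (Fin d₂) ℂ)
    (hρ₁ : ρ₁.PosSemidef) (htr₁ : ρ₁.trace = 1)
    (hρ₂ : ρ₂.PosSemidef) (htr₂ : ρ₂.trace = 1) (hrank₂ : ρ₂.rank = 1) :
    1 + schattenNorm q (ρ₁ ⊗ₖ ρ₂)
      = schattenNorm q (ptrace1 (ρ₁ ⊗ₖ ρ₂)) + schattenNorm q (ptrace2 (ρ₁ ⊗ₖ ρ₂))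
    ∧ 1 + schattenNorm q (ρ₁ ⊗ₖ ρ₂) = schattenNorm q ρ₂ + schattenNorm q ρ₁ := by
  have hq0 : q ≠ 0 := by positivity
  have hH1 := hρ₁.1
  have hH2 := hρ₂.1
  -- the pure state ρ₂ has one eigenvalue 1 and the rest 0
  have hcard : Fintype.card {j // hH2.eigenvalues j ≠ 0} = 1 := by
    rw [← hH2.rank_eq_card_non_zero_eigs]; exact hrank₂
  obtain ⟨j₀, hj₀⟩ := Fintype.card_eq_one_iff.mp hcard
  have hzero : ∀ j, j ≠ j₀.1 → hH2.eigenvalues j = 0 := by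
    intro j hj
    by_contra h
    exact hj (congrArg Subtype.val (hj₀ ⟨j, h⟩))
  have hsum2 : ∑ j, hH2.eigenvalues j = 1 := by
    have h := trace_eq_sum_eigs hH2
    rw [htr₂] at h
    exact_mod_cast h.symm
  have hone : hH2.eigenvalues j₀.1 = 1 := by
    rw [← hsum2, Finset.sum_eq_single j₀.1 (fun j _ hj => hzero j hj)
      (fun h => absurd (Finset.mem_univ _) h)]
  -- Schatten norm of ρ₂ is 1
  have t2 : traceRpow q ρ₂ = 1 := by
    rw [traceRpow, dif_pos hH2,
      Finset.sum_eq_single j₀.1 (fun j _ hj => by rw [hzero j hj, Real.zero_rpow hq0])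
      (fun h => absurd (Finset.mem_univ _) h), hone, Real.one_rpow]
  -- unitary diagonalization of the Kronecker product
  set U₁ := (hH1.eigenvectorUnitary : Matrix (Fin d₁) (Fin d₁) ℂ)
  set U₂ := (hH2.eigenvectorUnitary : Matrix (Fin d₂) (Fin d₂) ℂ)
  have hU1 : U₁ ∈ Matrix.unitaryGroup (Fin d₁) ℂ := hH1.eigenvectorUnitary.2
  have hU2 : U₂ ∈ Matrix.unitaryGroup (Fin d₂) ℂ := hH2.eigenvectorUnitary.2
  have hUk : U₁ ⊗ₖ U₂ ∈ Matrix.unitaryGroup (Fin d₁ × Fin d₂) ℂ := by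
    rw [Matrix.mem_unitaryGroup_iff]
    show (U₁ ⊗ₖ U₂) * (U₁ ⊗ₖ U₂)ᴴ = 1
    have h1 : U₁ * U₁ᴴ = 1 := Matrix.mem_unitaryGroup_iff.mp hU1
    have h2 : U₂ * U₂ᴴ = 1 := Matrix.mem_unitaryGroup_iff.mp hU2
    rw [conjTranspose_kron, ← Matrix.mul_kronecker_mul, h1, h2, Matrix.one_kronecker_one]
  have hdec : ρ₁ ⊗ₖ ρ₂ = (U₁ ⊗ₖ U₂)
      * Matrix.diagonal (fun p : Fin d₁ × Fin d₂ => ((hH1.eigenvalues p.1 * hH2.eigenvalues p.2 : ℝ) : ℂ))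
      * star (U₁ ⊗ₖ U₂) := by
    conv_lhs => rw [hH1.spectral_theorem, hH2.spectral_theorem]
    simp only [Unitary.conjStarAlgAut_apply, Unitary.coe_star]
    rw [Matrix.mul_kronecker_mul, Matrix.mul_kronecker_mul,
      Matrix.diagonal_kronecker_diagonal]
    have : star (U₁ ⊗ₖ U₂) = star U₁ ⊗ₖ star U₂ := conjTranspose_kron U₁ U₂
    rw [this]
    congr 1
    congr 1
    funext p
    simp [Complex.ofReal_mul]
  have hHk : (ρ₁ ⊗ₖ ρ₂).IsHermitian := by
    have e1 : ρ₁ᴴ = ρ₁ := hH1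
    have e2 : ρ₂ᴴ = ρ₂ := hH2
    show (ρ₁ ⊗ₖ ρ₂)ᴴ = ρ₁ ⊗ₖ ρ₂
    rw [conjTranspose_kron, e1, e2]
  have tk : traceRpow q (ρ₁ ⊗ₖ ρ₂) = traceRpow q ρ₁ := by
    rw [traceRpow, dif_pos hHk, traceRpow, dif_pos hH1]
    rw [sum_f_eigs hUk _ hdec hHk (fun x => x ^ q)]
    rw [Fintype.sum_prod_type]
    refine Finset.sum_congr rfl fun i _ => ?_
    rw [Finset.sum_eq_single j₀.1
      (fun j _ hj => by rw [hzero j hj, mul_zero, Real.zero_rpow hq0])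
      (fun h => absurd (Finset.mem_univ _) h), hone, mul_one]
  -- partial traces
  have htrace1 : ∑ i, ρ₁ i i = 1 := htr₁
  have htrace2 : ∑ j, ρ₂ j j = 1 := htr₂
  have hp1 : ptrace1 (ρ₁ ⊗ₖ ρ₂) = ρ₂ := by
    ext j j'
    simp only [ptrace1, Matrix.of_apply, Matrix.kroneckerMap_apply]
    rw [← Finset.sum_mul, htrace1, one_mul]
  have hp2 : ptrace2 (ρ₁ ⊗ₖ ρ₂) = ρ₁ := by
    ext i i'
    simp only [ptrace2, Matrix.of_apply, Matrix.kroneckerMap_apply]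
    rw [← Finset.mul_sum, htrace2, mul_one]
  have main : 1 + schattenNorm q (ρ₁ ⊗ₖ ρ₂) = schattenNorm q ρ₂ + schattenNorm q ρ₁ := by
    rw [schattenNorm, schattenNorm, schattenNorm, tk, t2, Real.one_rpow]
  exact ⟨by rw [hp1, hp2]; exact main, main⟩
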